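/- Let A be a UFD of characteristic p > 0 and B a subring of A containing A^p, and let m > 1. Assume elements f_1,…,f_m ∈ A form a p-basis of C_B(f_1,…,f_m) over B, and for i ≠ j set R_{ij} = B[f_1,…,f_m with f_i and f_j omitted]. Then for every i ≠ j in {1,…,m} and all b_1,b_2,c_1,c_2 ∈ R_{ij} with b_1,b_2 ≠ 0, gcd(b_1,c_1) a unit and gcd(b_2,c_2) a unit, the elements b_1·f_i + c_1 and b_2·f_j + c_2 have unit gcd (every common divisor of them is invertible). -/

import Mathlib

/-- The monomial `f₁^{α₁} ⋯ f_m^{α_m}` for a multi-index `α ∈ Ω_m` (all exponents `< p`). -/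
def pMonomial {S : Type*} [CommRing S] {m p : ℕ} (f : Fin m → S) (α : Fin m → Fin p) : S :=
  ∏ i, f i ^ (α i : ℕ)

/-- `f₁, …, f_m` are `p`-independent over the subring `B`. -/
def pIndependent {S : Type*} [CommRing S] (B : Subring S) {m : ℕ} (p : ℕ) (f : Fin m → S) : Prop :=
  ∀ b : (Fin m → Fin p) → S, (∀ α, b α ∈ B) →
    ∑ α : Fin m → Fin p, b α * pMonomial f α = 0 → ∀ α, b α = 0

/-- `f₁, …, f_m` form a `p`-basis of `R` over `B`. -/
def IsPBasis {S : Type*} [CommRing S] (B : Subring S) (R : Set S) {m : ℕ} (p : ℕ)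
    (f : Fin m → S) : Prop :=
  (↑B ⊆ R) ∧ (∀ α : Fin m → Fin p, pMonomial f α ∈ R) ∧ pIndependent B p f ∧
    ∀ r ∈ R, ∃ b : (Fin m → Fin p) → S, (∀ α, b α ∈ B) ∧
      r = ∑ α : Fin m → Fin p, b α * pMonomial f α

/-- An element is `B`-free if it has no noninvertible factor from `B`. -/
def BFree {S : Type*} [CommRing S] (B : Subring S) (a : S) : Prop :=
  ∀ b ∈ B, b ∣ a → IsUnit b

/-- `C_B(f₁,…,f_m) = B₀(f₁,…,f_m) ∩ A`: those elements of `A` lying in the field of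
fractions of `B[f₁,…,f_m]`. -/
def CB {S : Type*} [CommRing S] (B : Subring S) {m : ℕ} (f : Fin m → S) : Set S :=
  {a | ∃ s t : S, s ∈ Subring.closure (↑B ∪ Set.range f) ∧
      t ∈ Subring.closure (↑B ∪ Set.range f) ∧ s ≠ 0 ∧ a * s = t}

/-- A `B`-derivation of `A`: additive, satisfies the Leibniz rule, and vanishes on `B`. -/
def IsBDerivation {S : Type*} [CommRing S] (B : Subring S) (d : S → S) : Prop :=
  (∀ x y, d (x + y) = d x + d y) ∧ (∀ x y, d (x * y) = x * d y + y * d x) ∧ ∀ b ∈ B, d b = 0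

open Finset

section helpers
variable {A : Type*} [CommRing A] (B : Subring A) {m p : ℕ} (f : Fin m → A)

lemma pMonomial_split (hp : 0 < p) {i j : Fin m} (hij : i ≠ j) (β : Fin m → Fin p) :
    pMonomial f β =
      pMonomial f (Function.update (Function.update β i ⟨0, hp⟩) j ⟨0, hp⟩) *
        f i ^ (β i : ℕ) * f j ^ (β j : ℕ) := by
  classical
  have key : ∀ l : Fin m, f l ^ (β l : ℕ) =
      f l ^ (((Function.update (Function.update β i ⟨0, hp⟩) j ⟨0, hp⟩) l : Fin p) : ℕ) *
        (if l = i then f i ^ (β i : ℕ) else 1) * (if l = j then f j ^ (β j : ℕ) else 1) := by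
    intro l
    rcases eq_or_ne l i with rfl | hli
    · rw [Function.update_of_ne hij, Function.update_self]
      simp [hij]
    · rcases eq_or_ne l j with rfl | hlj
      · rw [Function.update_self]
        simp [hli]
      · rw [Function.update_of_ne hlj, Function.update_of_ne hli]
        simp [hli, hlj]
  unfold pMonomial
  rw [Finset.prod_congr rfl fun l _ => key l, Finset.prod_mul_distrib,
    Finset.prod_mul_distrib, Fintype.prod_ite_eq', Fintype.prod_ite_eq']

lemma pMonomial_mem_closure {i j : Fin m} {α : Fin m → Fin p}
    (hi : (α i : ℕ) = 0) (hj : (α j : ℕ) = 0) :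
    pMonomial f α ∈ Subring.closure ((B : Set A) ∪ f '' {l | l ≠ i ∧ l ≠ j}) := by
  classical
  unfold pMonomial
  refine Subring.prod_mem _ fun l _ => ?_
  rcases eq_or_ne l i with rfl | hli
  · rw [hi, pow_zero]; exact one_mem _
  · rcases eq_or_ne l j with rfl | hlj
    · rw [hj, pow_zero]; exact one_mem _
    · have hmem : f l ∈ ((B : Set A) ∪ f '' {l | l ≠ i ∧ l ≠ j}) :=
        Or.inr ⟨l, ⟨hli, hlj⟩, rfl⟩
      exact pow_mem (Subring.subset_closure hmem) _

lemma pMonomial_mul (hp : 0 < p) (hfp : ∀ l, f l ^ p ∈ B) (α β : Fin m → Fin p) :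
    ∃ u : A, u ∈ B ∧
      pMonomial f α * pMonomial f β =
        u * pMonomial f (fun l => ⟨((α l : ℕ) + (β l : ℕ)) % p, Nat.mod_lt _ hp⟩) := by
  refine ⟨∏ l, (f l ^ p) ^ (((α l : ℕ) + (β l : ℕ)) / p),
    Subring.prod_mem _ fun l _ => Subring.pow_mem _ (hfp l) _, ?_⟩
  unfold pMonomial
  rw [← Finset.prod_mul_distrib, ← Finset.prod_mul_distrib]
  refine Finset.prod_congr rfl fun l _ => ?_
  rw [← pow_add, ← pow_mul, ← pow_add]
  congr 1
  exact (Nat.div_add_mod ((α l : ℕ) + (β l : ℕ)) p).symm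

lemma single_sum (x : A) (e : Fin m → Fin p) :
    ∑ α : Fin m → Fin p, (if α = e then x else 0) * pMonomial f α = x * pMonomial f e := by
  classical
  have : ∀ α : Fin m → Fin p, (if α = e then x else 0) * pMonomial f α
      = if α = e then x * pMonomial f α else 0 := by
    intro α; split <;> simp
  rw [Finset.sum_congr rfl fun α _ => this α, Fintype.sum_ite_eq' e fun α => x * pMonomial f α]

lemma closure_expand (hp1 : 1 < p) (hfp : ∀ l, f l ^ p ∈ B) (i j : Fin m)
    {x : A} (hx : x ∈ Subring.closure ((B : Set A) ∪ f '' {l | l ≠ i ∧ l ≠ j})) :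
    ∃ d : (Fin m → Fin p) → A, (∀ α, d α ∈ B) ∧
      (∀ α, ¬((α i : ℕ) = 0 ∧ (α j : ℕ) = 0) → d α = 0) ∧
      x = ∑ α : Fin m → Fin p, d α * pMonomial f α := by
  classical
  have hp : 0 < p := by omega
  have hzero : pMonomial f (fun _ => (⟨0, hp⟩ : Fin p)) = 1 := by
    unfold pMonomial; simp
  induction hx using Subring.closure_induction with
  | mem x hx =>
    rcases hx with hxB | ⟨l, ⟨hli, hlj⟩, rfl⟩
    · refine ⟨fun α => if α = (fun _ => ⟨0, hp⟩) then x else 0,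
        fun α => ?_, fun α hα => ?_, ?_⟩
      · dsimp only; split
        · exact hxB
        · exact zero_mem _
      · dsimp only; rw [if_neg]; intro h; apply hα; rw [h]; exact ⟨rfl, rfl⟩
      · rw [single_sum, hzero, mul_one]
    · set e : Fin m → Fin p := fun t => if t = l then ⟨1, hp1⟩ else ⟨0, hp⟩ with he
      refine ⟨fun α => if α = e then 1 else 0, fun α => ?_, fun α hα => ?_, ?_⟩
      · dsimp only; split
        · exact one_mem _
        · exact zero_mem _
      · dsimp only; rw [if_neg]; intro h; apply hα; rw [h, he]
        simp [Ne.symm hli, Ne.symm hlj]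
      · rw [single_sum, one_mul]
        unfold pMonomial
        have : ∀ t : Fin m, f t ^ ((e t : Fin p) : ℕ) = if t = l then f t else 1 := by
          intro t; by_cases h : t = l <;> simp [e, h]
        rw [Finset.prod_congr rfl fun t _ => this t, Fintype.prod_ite_eq']
  | zero =>
    exact ⟨fun _ => 0, fun _ => zero_mem _, fun _ _ => rfl, by simp⟩
  | one =>
    refine ⟨fun α => if α = (fun _ => ⟨0, hp⟩) then 1 else 0,
      fun α => ?_, fun α hα => ?_, ?_⟩
    · dsimp only; split
      · exact one_mem _
      · exact zero_mem _
    · dsimp only; rw [if_neg]; intro h; apply hα; rw [h]; exact ⟨rfl, rfl⟩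
    · rw [single_sum, hzero, mul_one]
  | add x y hx' hy' ihx ihy =>
    obtain ⟨d, hdB, hds, hde⟩ := ihx
    obtain ⟨e, heB, hes, hee⟩ := ihy
    refine ⟨fun α => d α + e α, fun α => add_mem (hdB α) (heB α),
      fun α hα => by dsimp only; rw [hds α hα, hes α hα, add_zero], ?_⟩
    rw [hde, hee, ← Finset.sum_add_distrib]
    exact Finset.sum_congr rfl fun α _ => (add_mul _ _ _).symm
  | neg x hx' ihx =>
    obtain ⟨d, hdB, hds, hde⟩ := ihx
    refine ⟨fun α => -d α, fun α => neg_mem (hdB α),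
      fun α hα => by dsimp only; rw [hds α hα, neg_zero], ?_⟩
    rw [hde, ← Finset.sum_neg_distrib]
    exact Finset.sum_congr rfl fun α _ => (neg_mul _ _).symm
  | mul x y hx' hy' ihx ihy =>
    obtain ⟨d, hdB, hds, hde⟩ := ihx
    obtain ⟨e, heB, hes, hee⟩ := ihy
    choose u huB humul using pMonomial_mul B f hp hfp
    set γ : (Fin m → Fin p) → (Fin m → Fin p) → (Fin m → Fin p) :=
      fun α β => fun l => ⟨((α l : ℕ) + (β l : ℕ)) % p, Nat.mod_lt _ hp⟩ with hγ
    refine ⟨fun τ => ∑ z : (Fin m → Fin p) × (Fin m → Fin p),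
        if γ z.1 z.2 = τ then d z.1 * e z.2 * u z.1 z.2 else 0,
      fun τ => Subring.sum_mem _ fun z _ => ?_, fun τ hτ => ?_, ?_⟩
    · split
      · exact mul_mem (mul_mem (hdB z.1) (heB z.2)) (huB z.1 z.2)
      · exact zero_mem _
    · dsimp only
      refine Finset.sum_eq_zero fun z _ => ?_
      split
      · rename_i hz
        rcases not_and_or.mp hτ with hi | hj
        · have : ¬((z.1 i : ℕ) = 0 ∧ (z.2 i : ℕ) = 0) := by
            intro ⟨h1, h2⟩
            apply hi
            rw [← hz, hγ]
            simp [h1, h2]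
          rcases not_and_or.mp this with h1 | h2
          · rw [hds z.1 (fun h => h1 h.1), zero_mul, zero_mul]
          · rw [hes z.2 (fun h => h2 h.1), mul_zero, zero_mul]
        · have : ¬((z.1 j : ℕ) = 0 ∧ (z.2 j : ℕ) = 0) := by
            intro ⟨h1, h2⟩
            apply hj
            rw [← hz, hγ]
            simp [h1, h2]
          rcases not_and_or.mp this with h1 | h2
          · rw [hds z.1 (fun h => h1 h.2), zero_mul, zero_mul]
          · rw [hes z.2 (fun h => h2 h.2), mul_zero, zero_mul]
      · rfl
    · have swap : ∑ τ : Fin m → Fin p, (∑ z : (Fin m → Fin p) × (Fin m → Fin p),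
            if γ z.1 z.2 = τ then d z.1 * e z.2 * u z.1 z.2 else 0) * pMonomial f τ
          = ∑ z : (Fin m → Fin p) × (Fin m → Fin p),
              d z.1 * e z.2 * u z.1 z.2 * pMonomial f (γ z.1 z.2) := by
        calc ∑ τ : Fin m → Fin p, (∑ z : (Fin m → Fin p) × (Fin m → Fin p),
              if γ z.1 z.2 = τ then d z.1 * e z.2 * u z.1 z.2 else 0) * pMonomial f τ
            = ∑ τ : Fin m → Fin p, ∑ z : (Fin m → Fin p) × (Fin m → Fin p),
                (if γ z.1 z.2 = τ then d z.1 * e z.2 * u z.1 z.2 * pMonomial f τ else 0) := by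
              refine Finset.sum_congr rfl fun τ _ => ?_
              rw [Finset.sum_mul]
              exact Finset.sum_congr rfl fun z _ => by rw [ite_mul, zero_mul]
          _ = ∑ z : (Fin m → Fin p) × (Fin m → Fin p), ∑ τ : Fin m → Fin p,
                (if γ z.1 z.2 = τ then d z.1 * e z.2 * u z.1 z.2 * pMonomial f τ else 0) :=
              Finset.sum_comm
          _ = ∑ z : (Fin m → Fin p) × (Fin m → Fin p),
                d z.1 * e z.2 * u z.1 z.2 * pMonomial f (γ z.1 z.2) := by
              refine Finset.sum_congr rfl fun z _ => ?_
              exact Fintype.sum_ite_eq (γ z.1 z.2)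
                (fun τ => d z.1 * e z.2 * u z.1 z.2 * pMonomial f τ)
      rw [hde, hee, Finset.sum_mul_sum, swap, Fintype.sum_prod_type]
      refine Finset.sum_congr rfl fun a _ => Finset.sum_congr rfl fun b _ => ?_
      dsimp only
      have := humul a b
      calc d a * pMonomial f a * (e b * pMonomial f b)
          = d a * e b * (pMonomial f a * pMonomial f b) := by ring
        _ = d a * e b * (u a b * pMonomial f (γ a b)) := by rw [this, hγ]
        _ = d a * e b * u a b * pMonomial f (γ a b) := by ring

lemma rij_vanish (hp1 : 1 < p) (hfp : ∀ l, f l ^ p ∈ B) (hind : pIndependent B p f)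
    {i j : Fin m} (hij : i ≠ j) (r : Fin p → Fin p → A)
    (hr : ∀ s t, r s t ∈ Subring.closure ((B : Set A) ∪ f '' {l | l ≠ i ∧ l ≠ j}))
    (h0 : ∑ s : Fin p, ∑ t : Fin p, r s t * f i ^ (s : ℕ) * f j ^ (t : ℕ) = 0) :
    ∀ s t, r s t = 0 := by
  classical
  have hp : 0 < p := by omega
  choose d hdB hdsupp hdeq using fun s t => closure_expand B f hp1 hfp i j (hr s t)
  set ψ : Fin p → Fin p → (Fin m → Fin p) → (Fin m → Fin p) :=
    fun s t α => Function.update (Function.update α i s) j t with hψ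
  have hψi : ∀ s t α, ψ s t α i = s := by
    intro s t α; rw [hψ]; dsimp only
    rw [Function.update_of_ne hij, Function.update_self]
  have hψj : ∀ s t α, ψ s t α j = t := by
    intro s t α; rw [hψ]; dsimp only; rw [Function.update_self]
  have hψl : ∀ s t α (l : Fin m), l ≠ i → l ≠ j → ψ s t α l = α l := by
    intro s t α l hli hlj; rw [hψ]; dsimp only
    rw [Function.update_of_ne hlj, Function.update_of_ne hli]
  have hψpM : ∀ (s t : Fin p) (α : Fin m → Fin p), (α i : ℕ) = 0 → (α j : ℕ) = 0 →
      pMonomial f (ψ s t α) = pMonomial f α * f i ^ (s : ℕ) * f j ^ (t : ℕ) := by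
    intro s t α hαi hαj
    have h1 := pMonomial_split f hp hij (ψ s t α)
    have h2 : Function.update (Function.update (ψ s t α) i ⟨0, hp⟩) j ⟨0, hp⟩ = α := by
      funext l
      rcases eq_or_ne l j with rfl | hlj
      · rw [Function.update_self]
        exact (Fin.ext hαj).symm
      · rw [Function.update_of_ne hlj]
        rcases eq_or_ne l i with rfl | hli
        · rw [Function.update_self]
          exact (Fin.ext hαi).symm
        · rw [Function.update_of_ne hli]
          exact hψl s t α l hli hlj
    rw [h1, h2, hψi, hψj]
  set c : (Fin m → Fin p) → A := fun β => ∑ z : (Fin p × Fin p) × (Fin m → Fin p),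
    if ψ z.1.1 z.1.2 z.2 = β then d z.1.1 z.1.2 z.2 else 0 with hc
  have hcB : ∀ β, c β ∈ B := by
    intro β; rw [hc]; dsimp only
    refine Subring.sum_mem _ fun z _ => ?_
    split
    · exact hdB z.1.1 z.1.2 z.2
    · exact zero_mem _
  have hcsum : ∑ β : Fin m → Fin p, c β * pMonomial f β = 0 := by
    calc ∑ β : Fin m → Fin p, c β * pMonomial f β
        = ∑ β : Fin m → Fin p, ∑ z : (Fin p × Fin p) × (Fin m → Fin p),
            (if ψ z.1.1 z.1.2 z.2 = β then d z.1.1 z.1.2 z.2 * pMonomial f β else 0) := by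
          refine Finset.sum_congr rfl fun β _ => ?_
          rw [hc]; dsimp only
          rw [Finset.sum_mul]
          exact Finset.sum_congr rfl fun z _ => by rw [ite_mul, zero_mul]
      _ = ∑ z : (Fin p × Fin p) × (Fin m → Fin p), ∑ β : Fin m → Fin p,
            (if ψ z.1.1 z.1.2 z.2 = β then d z.1.1 z.1.2 z.2 * pMonomial f β else 0) :=
          Finset.sum_comm
      _ = ∑ z : (Fin p × Fin p) × (Fin m → Fin p),
            d z.1.1 z.1.2 z.2 * pMonomial f (ψ z.1.1 z.1.2 z.2) := by
          refine Finset.sum_congr rfl fun z _ => ?_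
          exact Fintype.sum_ite_eq (ψ z.1.1 z.1.2 z.2)
            (fun β => d z.1.1 z.1.2 z.2 * pMonomial f β)
      _ = ∑ z : (Fin p × Fin p) × (Fin m → Fin p),
            d z.1.1 z.1.2 z.2 * (pMonomial f z.2 * f i ^ (z.1.1 : ℕ) * f j ^ (z.1.2 : ℕ)) := by
          refine Finset.sum_congr rfl fun z _ => ?_
          by_cases hz : (z.2 i : ℕ) = 0 ∧ (z.2 j : ℕ) = 0
          · rw [hψpM z.1.1 z.1.2 z.2 hz.1 hz.2]
          · rw [hdsupp z.1.1 z.1.2 z.2 hz, zero_mul, zero_mul]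
      _ = ∑ s : Fin p, ∑ t : Fin p, ∑ α : Fin m → Fin p,
            d s t α * (pMonomial f α * f i ^ (s : ℕ) * f j ^ (t : ℕ)) := by
          rw [Fintype.sum_prod_type, Fintype.sum_prod_type]
      _ = ∑ s : Fin p, ∑ t : Fin p, r s t * f i ^ (s : ℕ) * f j ^ (t : ℕ) := by
          refine Finset.sum_congr rfl fun s _ => Finset.sum_congr rfl fun t _ => ?_
          rw [hdeq s t, Finset.sum_mul, Finset.sum_mul]
          exact Finset.sum_congr rfl fun α _ => by ring
      _ = 0 := h0
  have hc0 : ∀ β, c β = 0 := hind c hcB hcsum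
  intro s t
  rw [hdeq s t]
  refine Finset.sum_eq_zero fun α _ => ?_
  by_cases hα : (α i : ℕ) = 0 ∧ (α j : ℕ) = 0
  · have : d s t α = c (ψ s t α) := by
      rw [hc]; dsimp only
      rw [Finset.sum_eq_single_of_mem ((s, t), α) (Finset.mem_univ _)]
      · rw [if_pos rfl]
      · intro z _ hz
        by_cases hdz : d z.1.1 z.1.2 z.2 = 0
        · rw [hdz]; exact ite_self 0
        · have hzsupp : (z.2 i : ℕ) = 0 ∧ (z.2 j : ℕ) = 0 := by
            by_contra h
            exact hdz (hdsupp z.1.1 z.1.2 z.2 h)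
          rw [if_neg]
          intro heq
          apply hz
          have h1 : z.1.1 = s := by rw [← hψi z.1.1 z.1.2 z.2, heq, hψi]
          have h2 : z.1.2 = t := by rw [← hψj z.1.1 z.1.2 z.2, heq, hψj]
          have h3 : z.2 = α := by
            funext l
            rcases eq_or_ne l i with rfl | hli
            · rw [Fin.ext_iff]; omega
            · rcases eq_or_ne l j with rfl | hlj
              · rw [Fin.ext_iff]; omega
              · rw [← hψl z.1.1 z.1.2 z.2 l hli hlj, heq, hψl s t α l hli hlj]
          rw [Prod.ext_iff, Prod.ext_iff]
          exact ⟨⟨h1, h2⟩, h3⟩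
    rw [this, hc0, zero_mul]
  · rw [hdsupp s t α hα, zero_mul]

lemma collapse_s (x : Fin p → A) (a : Fin p) (gg : Fin p → Fin p → A) :
    ∑ s : Fin p, ∑ t : Fin p, (if s = a then x t else 0) * gg s t
      = ∑ t : Fin p, x t * gg a t := by
  classical
  rw [Finset.sum_comm]
  refine Finset.sum_congr rfl fun t _ => ?_
  have : ∀ s : Fin p, (if s = a then x t else 0) * gg s t
      = if s = a then x t * gg s t else 0 := by
    intro s; split <;> simp
  rw [Finset.sum_congr rfl fun s _ => this s]
  exact Fintype.sum_ite_eq' a (fun s => x t * gg s t)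

lemma triple_collapse (i j : Fin m) (F : (Fin m → Fin p) → A) (gg : Fin p → Fin p → A) :
    ∑ s : Fin p, ∑ t : Fin p, ∑ α : Fin m → Fin p,
        (if α i = s ∧ α j = t then F α * gg s t else 0)
      = ∑ α : Fin m → Fin p, F α * gg (α i) (α j) := by
  classical
  calc ∑ s : Fin p, ∑ t : Fin p, ∑ α : Fin m → Fin p,
        (if α i = s ∧ α j = t then F α * gg s t else 0)
      = ∑ z : Fin p × Fin p, ∑ α : Fin m → Fin p,
          (if (α i, α j) = z then F α * gg z.1 z.2 else 0) := by
        rw [Fintype.sum_prod_type]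
        refine Finset.sum_congr rfl fun s _ => Finset.sum_congr rfl fun t _ =>
          Finset.sum_congr rfl fun α _ => ?_
        simp [Prod.ext_iff]
    _ = ∑ α : Fin m → Fin p, ∑ z : Fin p × Fin p,
          (if (α i, α j) = z then F α * gg z.1 z.2 else 0) := Finset.sum_comm
    _ = ∑ α : Fin m → Fin p, F α * gg (α i) (α j) := by
        refine Finset.sum_congr rfl fun α _ => ?_
        exact Fintype.sum_ite_eq (α i, α j) (fun z => F α * gg z.1 z.2)

lemma double_ite_sum (x : A) (a b : Fin p) (gg : Fin p → Fin p → A) :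
    ∑ s : Fin p, ∑ t : Fin p, (if s = a ∧ t = b then x else 0) * gg s t = x * gg a b := by
  classical
  rw [Finset.sum_eq_single_of_mem a (Finset.mem_univ a)]
  · rw [Finset.sum_eq_single_of_mem b (Finset.mem_univ b)]
    · rw [if_pos ⟨rfl, rfl⟩]
    · intro t _ ht
      rw [if_neg (fun hh => ht hh.2), zero_mul]
  · intro s _ hs
    refine Finset.sum_eq_zero fun t _ => ?_
    rw [if_neg (fun hh => hs hh.1), zero_mul]

end helpers

/-- **Proposition 3 (ii).** Let `m > 1`. If `f₁,…,f_m` form a `p`-basis of `C_B(f₁,…,f_m)`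
over `B`, then for all `i ≠ j` and all `b₁, b₂, c₁, c₂ ∈ R_{ij} = B[f₁,…,f̂ᵢ,…,f̂ⱼ,…,f_m]`
with `b₁, b₂ ≠ 0`, `gcd(b₁,c₁) ∼ 1` and `gcd(b₂,c₂) ∼ 1`, the elements `b₁·fᵢ + c₁` and
`b₂·fⱼ + c₂` have unit gcd. -/
theorem isRelPrime_of_pBasis
    {A : Type*} [CommRing A] [IsDomain A] [UniqueFactorizationMonoid A]
    (p : ℕ) (hp : 0 < p) [CharP A p]
    (B : Subring A) (hB : ∀ a : A, a ^ p ∈ B) {m : ℕ} (hm : 1 < m) (f : Fin m → A)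
    (hbasis : IsPBasis B (CB B f) p f) :
    ∀ i j : Fin m, i ≠ j → ∀ b₁ b₂ c₁ c₂ : A,
      b₁ ∈ Subring.closure ((B : Set A) ∪ (f '' {l | l ≠ i ∧ l ≠ j})) →
      b₂ ∈ Subring.closure ((B : Set A) ∪ (f '' {l | l ≠ i ∧ l ≠ j})) →
      c₁ ∈ Subring.closure ((B : Set A) ∪ (f '' {l | l ≠ i ∧ l ≠ j})) →
      c₂ ∈ Subring.closure ((B : Set A) ∪ (f '' {l | l ≠ i ∧ l ≠ j})) →
      b₁ ≠ 0 → b₂ ≠ 0 → IsRelPrime b₁ c₁ → IsRelPrime b₂ c₂ →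
      IsRelPrime (b₁ * f i + c₁) (b₂ * f j + c₂) := by
  classical
  haveI : NeZero p := ⟨hp.ne'⟩
  have pp : p.Prime := (CharP.char_is_prime_of_pos A p).out
  have hp1 : 1 < p := pp.one_lt
  have hfp : ∀ l, f l ^ p ∈ B := fun l => hB (f l)
  have hind : pIndependent B p f := hbasis.2.2.1
  intro i j hij b₁ b₂ c₁ c₂ hb₁ hb₂ hc₁ hc₂ hb₁0 hb₂0 hrp₁ hrp₂
  set f0 : Fin p := ⟨0, hp⟩ with hf0
  set f1 : Fin p := ⟨1, hp1⟩ with hf1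
  set tpm : Fin p := ⟨p - 1, by omega⟩ with htpm
  have hf10 : f1 ≠ f0 := by simp [hf1, hf0, Fin.ext_iff]
  have hv0 : (f0 : ℕ) = 0 := rfl
  have hv1 : (f1 : ℕ) = 1 := rfl
  have hvtpm : (tpm : ℕ) = p - 1 := rfl
  set u : A := b₁ * f i + c₁ with hu
  set w : A := b₂ * f j + c₂ with hw
  -- u ≠ 0
  have hune : u ≠ 0 := by
    intro h0
    set r : Fin p → Fin p → A := fun s t =>
      (if s = f1 ∧ t = f0 then b₁ else 0) + (if s = f0 ∧ t = f0 then c₁ else 0) with hr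
    have hrmem : ∀ s t, r s t ∈ Subring.closure ((B : Set A) ∪ (f '' {l | l ≠ i ∧ l ≠ j})) := by
      intro s t; rw [hr]; dsimp only
      refine add_mem ?_ ?_
      · split
        · exact hb₁
        · exact zero_mem _
      · split
        · exact hc₁
        · exact zero_mem _
    have hrsum : ∑ s : Fin p, ∑ t : Fin p, r s t * f i ^ (s : ℕ) * f j ^ (t : ℕ) = 0 := by
      have expand : ∀ s t : Fin p, r s t * f i ^ (s : ℕ) * f j ^ (t : ℕ)
          = (if s = f1 ∧ t = f0 then b₁ else 0) * (f i ^ (s : ℕ) * f j ^ (t : ℕ))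
            + (if s = f0 ∧ t = f0 then c₁ else 0) * (f i ^ (s : ℕ) * f j ^ (t : ℕ)) := by
        intro s t; rw [hr]; ring
      calc ∑ s : Fin p, ∑ t : Fin p, r s t * f i ^ (s : ℕ) * f j ^ (t : ℕ)
          = (∑ s : Fin p, ∑ t : Fin p, (if s = f1 ∧ t = f0 then b₁ else 0)
                * (f i ^ (s : ℕ) * f j ^ (t : ℕ)))
            + ∑ s : Fin p, ∑ t : Fin p, (if s = f0 ∧ t = f0 then c₁ else 0)
                * (f i ^ (s : ℕ) * f j ^ (t : ℕ)) := by
            rw [← Finset.sum_add_distrib]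
            refine Finset.sum_congr rfl fun s _ => ?_
            rw [← Finset.sum_add_distrib]
            exact Finset.sum_congr rfl fun t _ => expand s t
        _ = b₁ * (f i ^ (f1 : ℕ) * f j ^ (f0 : ℕ)) + c₁ * (f i ^ (f0 : ℕ) * f j ^ (f0 : ℕ)) := by
            rw [double_ite_sum, double_ite_sum]
        _ = u := by rw [hf1, hf0]; simp [hu]
        _ = 0 := h0
    have := rij_vanish B f hp1 hfp hind hij r hrmem hrsum f1 f0
    rw [hr] at this; dsimp only at this
    rw [if_pos ⟨rfl, rfl⟩, if_neg (fun hh => hf10 hh.1), add_zero] at this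
    exact hb₁0 this
  -- main argument
  intro d hdu hdw
  by_contra hdnu
  have hd0 : d ≠ 0 := by
    intro h; rw [h, zero_dvd_iff] at hdu; exact hune hdu
  obtain ⟨q, hqirr, hqd⟩ := WfDvdMonoid.exists_irreducible_factor hdnu hd0
  have hq : Prime q := UniqueFactorizationMonoid.irreducible_iff_prime.mp hqirr
  obtain ⟨a, ha⟩ := hqd.trans hdu
  obtain ⟨b, hb⟩ := hqd.trans hdw
  have hqp : q ^ p = q * q ^ (p - 1) := by
    conv_lhs => rw [show p = (p - 1) + 1 from by omega]
    rw [pow_succ]; ring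
  -- g ∈ CB
  set T : Subring A := Subring.closure ((B : Set A) ∪ Set.range f) with hT
  have hST : Subring.closure ((B : Set A) ∪ (f '' {l | l ≠ i ∧ l ≠ j})) ≤ T :=
    Subring.closure_mono (Set.union_subset_union_right _ (Set.image_subset_range _ _))
  have huT : u ∈ T := by
    rw [hu]
    exact add_mem (mul_mem (hST hb₁) (Subring.subset_closure (Or.inr ⟨i, rfl⟩))) (hST hc₁)
  have hwT : w ∈ T := by
    rw [hw]
    exact add_mem (mul_mem (hST hb₂) (Subring.subset_closure (Or.inr ⟨j, rfl⟩))) (hST hc₂)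
  set g : A := a * b ^ (p - 1) with hg
  have hgCB : g ∈ CB B f := by
    refine ⟨q ^ p, u * w ^ (p - 1), Subring.subset_closure (Or.inl (hB q)),
      mul_mem huT (pow_mem hwT _), pow_ne_zero _ hq.ne_zero, ?_⟩
    rw [hg, ha, hb, mul_pow, hqp]; ring
  obtain ⟨h, hhB, hheq⟩ := hbasis.2.2.2 g hgCB
  -- the two double-indexed representations
  set zij : (Fin m → Fin p) → (Fin m → Fin p) :=
    fun α => Function.update (Function.update α i f0) j f0 with hzij
  have hzij0 : ∀ α, ((zij α i : Fin p) : ℕ) = 0 ∧ ((zij α j : Fin p) : ℕ) = 0 := by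
    intro α
    constructor
    · rw [hzij]; dsimp only; rw [Function.update_of_ne hij, Function.update_self]
    · rw [hzij]; dsimp only; rw [Function.update_self]
  set E : Fin p → A := fun t => b₂ ^ (t : ℕ) * c₂ ^ (p - 1 - (t : ℕ)) * ((p - 1).choose (t : ℕ) : A)
    with hE
  set U : Fin p → Fin p → A := fun s t =>
    (if s = f1 then b₁ * E t else 0) + (if s = f0 then c₁ * E t else 0) with hU
  set G : Fin p → Fin p → A := fun s t =>
    ∑ α : Fin m → Fin p, if α i = s ∧ α j = t then (q ^ p * h α) * pMonomial f (zij α) else 0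
    with hG
  have hsplit : ∀ α : Fin m → Fin p, pMonomial f α
      = pMonomial f (zij α) * f i ^ ((α i : Fin p) : ℕ) * f j ^ ((α j : Fin p) : ℕ) := by
    intro α; rw [hzij]; dsimp only; rw [hf0]; exact pMonomial_split f hp hij α
  -- U-sum
  have hwpow : w ^ (p - 1) = ∑ t : Fin p,
      (b₂ * f j) ^ (t : ℕ) * c₂ ^ (p - 1 - (t : ℕ)) * ((p - 1).choose (t : ℕ) : A) := by
    rw [hw, add_pow, show p - 1 + 1 = p from by omega, ← Fin.sum_univ_eq_sum_range]
  have hUsum : ∑ s : Fin p, ∑ t : Fin p, U s t * f i ^ (s : ℕ) * f j ^ (t : ℕ)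
      = u * w ^ (p - 1) := by
    have expand : ∀ s t : Fin p, U s t * f i ^ (s : ℕ) * f j ^ (t : ℕ)
        = (if s = f1 then b₁ * E t else 0) * (f i ^ (s : ℕ) * f j ^ (t : ℕ))
          + (if s = f0 then c₁ * E t else 0) * (f i ^ (s : ℕ) * f j ^ (t : ℕ)) := by
      intro s t; rw [hU]; dsimp only; ring
    calc ∑ s : Fin p, ∑ t : Fin p, U s t * f i ^ (s : ℕ) * f j ^ (t : ℕ)
        = (∑ s : Fin p, ∑ t : Fin p, (if s = f1 then b₁ * E t else 0)
              * (f i ^ (s : ℕ) * f j ^ (t : ℕ)))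
          + ∑ s : Fin p, ∑ t : Fin p, (if s = f0 then c₁ * E t else 0)
              * (f i ^ (s : ℕ) * f j ^ (t : ℕ)) := by
          rw [← Finset.sum_add_distrib]
          refine Finset.sum_congr rfl fun s _ => ?_
          rw [← Finset.sum_add_distrib]
          exact Finset.sum_congr rfl fun t _ => expand s t
      _ = (∑ t : Fin p, (b₁ * E t) * (f i ^ (f1 : ℕ) * f j ^ (t : ℕ)))
          + ∑ t : Fin p, (c₁ * E t) * (f i ^ (f0 : ℕ) * f j ^ (t : ℕ)) := by
          rw [collapse_s, collapse_s]
      _ = u * w ^ (p - 1) := by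
          rw [hwpow, Finset.mul_sum, hu, ← Finset.sum_add_distrib]
          refine Finset.sum_congr rfl fun t _ => ?_
          rw [hE]; dsimp only
          rw [mul_pow]; ring
  -- G-sum
  have hGsum : ∑ s : Fin p, ∑ t : Fin p, G s t * f i ^ (s : ℕ) * f j ^ (t : ℕ)
      = q ^ p * g := by
    calc ∑ s : Fin p, ∑ t : Fin p, G s t * f i ^ (s : ℕ) * f j ^ (t : ℕ)
        = ∑ s : Fin p, ∑ t : Fin p, ∑ α : Fin m → Fin p,
            (if α i = s ∧ α j = t then
              ((q ^ p * h α) * pMonomial f (zij α)) * (f i ^ (s : ℕ) * f j ^ (t : ℕ))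
            else 0) := by
          refine Finset.sum_congr rfl fun s _ => Finset.sum_congr rfl fun t _ => ?_
          rw [hG]; dsimp only
          rw [Finset.sum_mul, Finset.sum_mul]
          refine Finset.sum_congr rfl fun α _ => ?_
          split
          · ring
          · rw [zero_mul, zero_mul]
      _ = ∑ α : Fin m → Fin p,
            ((q ^ p * h α) * pMonomial f (zij α)) * (f i ^ ((α i : Fin p) : ℕ) * f j ^ ((α j : Fin p) : ℕ)) :=
          triple_collapse i j _ _
      _ = q ^ p * ∑ α : Fin m → Fin p, h α * pMonomial f α := by
          rw [Finset.mul_sum]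
          refine Finset.sum_congr rfl fun α _ => ?_
          calc ((q ^ p * h α) * pMonomial f (zij α))
                * (f i ^ ((α i : Fin p) : ℕ) * f j ^ ((α j : Fin p) : ℕ))
              = (q ^ p * h α) * (pMonomial f (zij α)
                  * f i ^ ((α i : Fin p) : ℕ) * f j ^ ((α j : Fin p) : ℕ)) := by ring
            _ = (q ^ p * h α) * pMonomial f α := by rw [← hsplit α]
            _ = q ^ p * (h α * pMonomial f α) := by ring
      _ = q ^ p * g := by rw [hheq]
  -- divisibility of G
  have hqG : ∀ s t, q ∣ G s t := by
    intro s t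
    refine ⟨∑ α : Fin m → Fin p,
      if α i = s ∧ α j = t then (q ^ (p - 1) * h α) * pMonomial f (zij α) else 0, ?_⟩
    rw [hG]; dsimp only
    rw [Finset.mul_sum]
    refine Finset.sum_congr rfl fun α _ => ?_
    split
    · rw [hqp]; ring
    · rw [mul_zero]
  -- memberships
  have hUmem : ∀ s t, U s t ∈ Subring.closure ((B : Set A) ∪ (f '' {l | l ≠ i ∧ l ≠ j})) := by
    intro s t
    have hEmem : E t ∈ Subring.closure ((B : Set A) ∪ (f '' {l | l ≠ i ∧ l ≠ j})) := by
      rw [hE]; dsimp only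
      exact mul_mem (mul_mem (pow_mem hb₂ _) (pow_mem hc₂ _)) (natCast_mem _ _)
    rw [hU]; dsimp only
    refine add_mem ?_ ?_
    · split
      · exact mul_mem hb₁ hEmem
      · exact zero_mem _
    · split
      · exact mul_mem hc₁ hEmem
      · exact zero_mem _
  have hGmem : ∀ s t, G s t ∈ Subring.closure ((B : Set A) ∪ (f '' {l | l ≠ i ∧ l ≠ j})) := by
    intro s t
    rw [hG]; dsimp only
    refine Subring.sum_mem _ fun α _ => ?_
    split
    · exact mul_mem (Subring.subset_closure (Or.inl (mul_mem (hB q) (hhB α))))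
        (pMonomial_mem_closure B f (hzij0 α).1 (hzij0 α).2)
    · exact zero_mem _
  -- key equation
  have hkey : ∑ s : Fin p, ∑ t : Fin p,
      (U s t - G s t) * f i ^ (s : ℕ) * f j ^ (t : ℕ) = 0 := by
    calc ∑ s : Fin p, ∑ t : Fin p, (U s t - G s t) * f i ^ (s : ℕ) * f j ^ (t : ℕ)
        = ∑ s : Fin p, ∑ t : Fin p,
            (U s t * f i ^ (s : ℕ) * f j ^ (t : ℕ) - G s t * f i ^ (s : ℕ) * f j ^ (t : ℕ)) := by
          refine Finset.sum_congr rfl fun s _ => Finset.sum_congr rfl fun t _ => ?_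
          ring
      _ = (∑ s : Fin p, ∑ t : Fin p, U s t * f i ^ (s : ℕ) * f j ^ (t : ℕ))
          - ∑ s : Fin p, ∑ t : Fin p, G s t * f i ^ (s : ℕ) * f j ^ (t : ℕ) := by
          rw [← Finset.sum_sub_distrib]
          exact Finset.sum_congr rfl fun s _ => Finset.sum_sub_distrib _ _
      _ = u * w ^ (p - 1) - q ^ p * g := by rw [hUsum, hGsum]
      _ = 0 := by rw [ha, hb, hg, mul_pow, hqp]; ring
  have hUG := rij_vanish B f hp1 hfp hind hij (fun s t => U s t - G s t)
    (fun s t => sub_mem (hUmem s t) (hGmem s t)) hkey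
  have hqU : ∀ s t, q ∣ U s t := by
    intro s t
    have h0 : U s t = G s t := by
      have := hUG s t
      exact sub_eq_zero.mp this
    rw [h0]; exact hqG s t
  -- values of U
  have hEtpm : E tpm = b₂ ^ (p - 1) := by
    rw [hE]; dsimp only
    rw [Nat.sub_self, pow_zero, mul_one, Nat.choose_self, Nat.cast_one, mul_one]
  have hEf0 : E f0 = c₂ ^ (p - 1) := by
    rw [hE]; dsimp only
    rw [pow_zero, one_mul, Nat.sub_zero, Nat.choose_zero_right, Nat.cast_one, mul_one]
  have hUval1 : U f1 tpm = b₁ * b₂ ^ (p - 1) := by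
    rw [hU]; dsimp only
    rw [if_pos rfl, if_neg hf10, add_zero, hEtpm]
  have hUval2 : U f0 tpm = c₁ * b₂ ^ (p - 1) := by
    rw [hU]; dsimp only
    rw [if_pos rfl, if_neg (Ne.symm hf10), zero_add, hEtpm]
  have hUval3 : U f1 f0 = b₁ * c₂ ^ (p - 1) := by
    rw [hU]; dsimp only
    rw [if_pos rfl, if_neg hf10, add_zero, hEf0]
  have hUval4 : U f0 f0 = c₁ * c₂ ^ (p - 1) := by
    rw [hU]; dsimp only
    rw [if_pos rfl, if_neg (Ne.symm hf10), zero_add, hEf0]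
  have h1 : q ∣ b₁ * b₂ ^ (p - 1) := hUval1 ▸ hqU f1 tpm
  have h2 : q ∣ c₁ * b₂ ^ (p - 1) := hUval2 ▸ hqU f0 tpm
  have h3 : q ∣ b₁ * c₂ ^ (p - 1) := hUval3 ▸ hqU f1 f0
  have h4 : q ∣ c₁ * c₂ ^ (p - 1) := hUval4 ▸ hqU f0 f0
  by_cases hqb2 : q ∣ b₂
  · by_cases hqc2 : q ∣ c₂
    · exact hq.not_unit (hrp₂ hqb2 hqc2)
    · have hqb1 : q ∣ b₁ :=
        ((hq.dvd_mul.mp h3).resolve_right fun hh => hqc2 (hq.dvd_of_dvd_pow hh))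
      have hqc1 : q ∣ c₁ :=
        ((hq.dvd_mul.mp h4).resolve_right fun hh => hqc2 (hq.dvd_of_dvd_pow hh))
      exact hq.not_unit (hrp₁ hqb1 hqc1)
  · have hqb1 : q ∣ b₁ :=
      ((hq.dvd_mul.mp h1).resolve_right fun hh => hqb2 (hq.dvd_of_dvd_pow hh))
    have hqc1 : q ∣ c₁ :=
      ((hq.dvd_mul.mp h2).resolve_right fun hh => hqb2 (hq.dvd_of_dvd_pow hh))
    exact hq.not_unit (hrp₁ hqb1 hqc1)
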